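/- Let $j \geq 2$, $0 < \epsilon \leq 1$, and let $p, q$ be probability distributions on $\{1,\ldots,b\}$ with $p_1 \geq 1-\epsilon$ and $q_1 \geq 1-\epsilon$. Then $\Psi(p,q) \leq 2(j+1)\epsilon^{j-1}$. -/

import Mathlib

open Finset

/-- Ψ defined via a sum over permutations of `{1,…,b}`. -/
noncomputable def psiPerm (b j : ℕ) (h : j + 1 ≤ b) (p q : Fin b → ℝ) : ℝ :=
  (1 / (Nat.factorial (b - j - 1) : ℝ)) *
    ∑ σ : Equiv.Perm (Fin b),
      ((∏ t : Fin j, p (σ (Fin.castLE (by omega) t))) * q (σ (⟨j, by omega⟩ : Fin b))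
        + (∏ t : Fin j, q (σ (Fin.castLE (by omega) t))) * p (σ (⟨j, by omega⟩ : Fin b)))

lemma perm_fiber_card (b m : ℕ) (h : m ≤ b) (σ0 : Equiv.Perm (Fin b)) :
    #(univ.filter fun σ : Equiv.Perm (Fin b) =>
        (fun i : Fin m => σ (Fin.castLE h i)) = (fun i => σ0 (Fin.castLE h i)))
      = Nat.factorial (b - m) := by
  rw [← Fintype.card_subtype]
  have E1 : {σ : Equiv.Perm (Fin b) //
      (fun i : Fin m => σ (Fin.castLE h i)) = (fun i => σ0 (Fin.castLE h i))} ≃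
      {τ : Equiv.Perm (Fin b) // ∀ a : Fin b, ¬ ¬ (a : ℕ) < m → τ a = a} := by
    refine ⟨fun σ => ⟨σ0⁻¹ * σ.1, ?_⟩, fun τ => ⟨σ0 * τ.1, ?_⟩, ?_, ?_⟩
    · intro a ha
      push_neg at ha
      have := congrFun σ.2 ⟨a, ha⟩
      have ha2 : Fin.castLE h (⟨a, ha⟩ : Fin m) = a := by ext; rfl
      rw [ha2] at this
      simp [Equiv.Perm.mul_apply, this]
    · funext i
      have := τ.2 (Fin.castLE h i) (by simp [Fin.castLE])
      simp [Equiv.Perm.mul_apply, this]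
    · intro σ; ext x; simp
    · intro τ; ext x; simp
  rw [Fintype.card_congr E1, Fintype.card_congr
    (Equiv.Perm.subtypeEquivSubtypePerm (fun a : Fin b => ¬ (a : ℕ) < m)).symm,
    Fintype.card_perm]
  congr 1
  have : Fintype.card {a : Fin b // (a : ℕ) < m} = m := by
    have e : {a : Fin b // (a : ℕ) < m} ≃ Fin m :=
      ⟨fun a => ⟨a.1.1, a.2⟩, fun i => ⟨⟨i.1, lt_of_lt_of_le i.2 h⟩, i.2⟩,
        fun a => rfl, fun i => rfl⟩
    rw [Fintype.card_congr e, Fintype.card_fin]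
  calc Fintype.card {a : Fin b // ¬ (a : ℕ) < m}
      = Fintype.card (Fin b) - Fintype.card {a : Fin b // (a : ℕ) < m} :=
        Fintype.card_subtype_compl _
    _ = b - m := by rw [this, Fintype.card_fin]

lemma sum_perm_le (b m : ℕ) (h : m ≤ b) (g : (Fin m → Fin b) → ℝ) (hg : ∀ v, 0 ≤ g v) :
    ∑ σ : Equiv.Perm (Fin b), g (fun i => σ (Fin.castLE h i)) ≤
      (Nat.factorial (b - m) : ℝ) *
        ∑ v ∈ univ.filter (fun v : Fin m → Fin b => Function.Injective v), g v := by
  rw [Finset.sum_comp g (fun σ : Equiv.Perm (Fin b) => fun i : Fin m => σ (Fin.castLE h i))]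
  rw [Finset.mul_sum]
  calc ∑ v ∈ univ.image (fun σ : Equiv.Perm (Fin b) => fun i : Fin m => σ (Fin.castLE h i)),
        #(univ.filter fun σ : Equiv.Perm (Fin b) =>
          (fun i : Fin m => σ (Fin.castLE h i)) = v) • g v
      = ∑ v ∈ univ.image (fun σ : Equiv.Perm (Fin b) => fun i : Fin m => σ (Fin.castLE h i)),
          (Nat.factorial (b - m) : ℝ) * g v := by
        refine Finset.sum_congr rfl fun v hv => ?_
        simp only [mem_image, mem_univ, true_and] at hv
        obtain ⟨σ0, rfl⟩ := hv
        rw [perm_fiber_card b m h σ0, nsmul_eq_mul]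
    _ ≤ _ := by
        refine Finset.sum_le_sum_of_subset_of_nonneg ?_ ?_
        · intro v hv
          simp only [mem_image, mem_univ, true_and] at hv
          obtain ⟨σ, rfl⟩ := hv
          simp only [mem_filter, mem_univ, true_and]
          exact fun i i' hii => Fin.castLE_injective h (σ.injective hii)
        · intro v _ _
          exact mul_nonneg (Nat.cast_nonneg _) (hg v)

lemma sum_biUnion_le' {ι α : Type*} [DecidableEq ι] [DecidableEq α] (s : Finset ι)
    (t : ι → Finset α) (f : α → ℝ) (hf : ∀ x, 0 ≤ f x) :
    ∑ x ∈ s.biUnion t, f x ≤ ∑ c ∈ s, ∑ x ∈ t c, f x := by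
  induction s using Finset.induction with
  | empty => simp
  | insert _ _ hni ih =>
    rename_i a s
    rw [Finset.biUnion_insert, Finset.sum_insert hni]
    calc ∑ x ∈ t a ∪ s.biUnion t, f x
        ≤ ∑ x ∈ t a, f x + ∑ x ∈ s.biUnion t, f x := by
          have h2 := Finset.sum_union_inter (s₁ := t a) (s₂ := s.biUnion t) (f := f)
          have h3 : 0 ≤ ∑ x ∈ t a ∩ s.biUnion t, f x := Finset.sum_nonneg fun x _ => hf x
          linarith
      _ ≤ _ := by linarith [ih]

lemma tuple_sum_le (b j : ℕ) (hj : 2 ≤ j) (h : j + 1 ≤ b)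
    (ε : ℝ) (hε0 : 0 < ε) (hε1 : ε ≤ 1)
    (p q : Fin b → ℝ) (hp : ∀ a, 0 ≤ p a) (hq : ∀ a, 0 ≤ q a)
    (hps : ∑ a, p a = 1) (hqs : ∑ a, q a = 1)
    (hp1 : 1 - ε ≤ p ⟨0, lt_of_lt_of_le (Nat.succ_pos j) h⟩) :
    ∑ v ∈ univ.filter (fun v : Fin (j+1) → Fin b => Function.Injective v),
      (∏ k : Fin j, p (v k.castSucc)) * q (v (Fin.last j)) ≤ (j+1) * ε^(j-1) := by
  set z : Fin b := ⟨0, by omega⟩ with hz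
  classical
  set t : Option (Fin j) → Fin (j+1) → Finset (Fin b) := fun c l =>
    if l = Fin.last j then univ
    else match c with
      | some i => if l = i.castSucc then {z} else univ \ {z}
      | none => univ \ {z} with ht
  set g : (Fin (j+1) → Fin b) → ℝ := fun v =>
    (∏ k : Fin j, p (v k.castSucc)) * q (v (Fin.last j)) with hg
  have hcsl : ∀ k : Fin j, k.castSucc ≠ Fin.last j := fun k =>
    Fin.ne_of_lt (Fin.castSucc_lt_last k)
  have hgnn : ∀ v, 0 ≤ g v := fun v =>
    mul_nonneg (Finset.prod_nonneg fun k _ => hp _) (hq _)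
  have hsub : univ.filter (fun v : Fin (j+1) → Fin b => Function.Injective v) ⊆
      (univ : Finset (Option (Fin j))).biUnion (fun c => Fintype.piFinset (t c)) := by
    intro v hv
    simp only [mem_filter, mem_univ, true_and] at hv
    rw [Finset.mem_biUnion]
    by_cases hex : ∃ k : Fin j, v k.castSucc = z
    · obtain ⟨k, hk⟩ := hex
      refine ⟨some k, mem_univ _, ?_⟩
      rw [Fintype.mem_piFinset]
      intro l
      by_cases hl : l = Fin.last j
      · simp [ht, hl]
      · by_cases hlk : l = k.castSucc
        · simp [ht, hl, hlk, hk, hcsl k]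
        · have : v l ≠ z := fun hc => hlk (hv (hc.trans hk.symm))
          simp [ht, hl, hlk, this]
    · push_neg at hex
      refine ⟨none, mem_univ _, ?_⟩
      rw [Fintype.mem_piFinset]
      intro l
      by_cases hl : l = Fin.last j
      · simp [ht, hl]
      · have hlv : (l : ℕ) < j := by
          have := l.2
          rcases lt_or_eq_of_le (Nat.lt_succ_iff.mp this) with h' | h'
          · exact h'
          · exact absurd (Fin.ext h' : l = Fin.last j) hl
        have : v l ≠ z := by
          have := hex ⟨l, hlv⟩
          have hcast : (⟨(l : ℕ), hlv⟩ : Fin j).castSucc = l := by ext; rfl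
          rwa [hcast] at this
        simp [ht, hl, this]
  have hεj : 0 ≤ ε ^ (j - 1) := le_of_lt (pow_pos hε0 _)
  have hpz1 : p z ≤ 1 := by
    have := Finset.single_le_sum (f := p) (fun a _ => hp a) (mem_univ z)
    linarith [hps ▸ this]
  have hperase : ∑ x ∈ univ \ {z}, p x ≤ ε := by
    rw [Finset.sdiff_singleton_eq_erase, Finset.sum_erase_eq_sub (mem_univ z), hps]
    linarith
  have hclass : ∀ c : Option (Fin j), ∑ v ∈ Fintype.piFinset (t c), g v ≤ ε ^ (j - 1) := by
    intro c
    set hfun : Fin (j+1) → Fin b → ℝ := fun l x => if l = Fin.last j then q x else p x with hh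
    have hgv : ∀ v, g v = ∏ l : Fin (j+1), hfun l (v l) := by
      intro v
      rw [Fin.prod_univ_castSucc]
      simp only [hh, hg, if_true]
      congr 1
      exact Finset.prod_congr rfl fun k _ => by rw [if_neg (hcsl k)]
    simp_rw [hgv]
    rw [← Finset.prod_univ_sum]
    have hfactnn : ∀ l, 0 ≤ ∑ x ∈ t c l, hfun l x := by
      intro l
      refine Finset.sum_nonneg fun x _ => ?_
      by_cases hl : l = Fin.last j <;> simp [hh, hl, hp x, hq x]
    have hSlast : ∑ x ∈ t c (Fin.last j), hfun (Fin.last j) x = 1 := by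
      simp [ht, hh, hqs]
    have hSp : ∀ k : Fin j, ∑ x ∈ t c k.castSucc, hfun k.castSucc x =
        ∑ x ∈ t c k.castSucc, p x := by
      intro k
      refine Finset.sum_congr rfl fun x _ => ?_
      simp only [hh]
      rw [if_neg (hcsl k)]
    rw [Fin.prod_univ_castSucc, hSlast, mul_one]
    match c with
    | some i =>
      calc ∏ k : Fin j, ∑ x ∈ t (some i) k.castSucc, hfun k.castSucc x
          ≤ ∏ k : Fin j, (if k = i then 1 else ε) := by
            refine Finset.prod_le_prod (fun k _ => hfactnn k.castSucc) (fun k _ => ?_)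
            rw [hSp k]
            by_cases hk : k = i
            · subst hk
              have h1 : t (some k) k.castSucc = {z} := by simp [ht, hcsl k]
              rw [h1, if_pos rfl, Finset.sum_singleton]
              exact hpz1
            · have hne : k.castSucc ≠ i.castSucc := fun hc => hk (Fin.castSucc_injective _ hc)
              have h1 : t (some i) k.castSucc = univ \ {z} := by
                simp [ht, hne, hcsl k]
              rw [h1, if_neg hk]
              exact hperase
        _ = ε ^ (j - 1) := by
            rw [← Finset.mul_prod_erase univ _ (mem_univ i), if_pos rfl, one_mul]
            rw [Finset.prod_congr rfl (fun k hk => if_neg (Finset.mem_erase.mp hk).1),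
              Finset.prod_const, Finset.card_erase_of_mem (mem_univ i), Finset.card_univ,
              Fintype.card_fin]
    | none =>
      calc ∏ k : Fin j, ∑ x ∈ t none k.castSucc, hfun k.castSucc x
          ≤ ∏ _k : Fin j, ε := by
            refine Finset.prod_le_prod (fun k _ => hfactnn k.castSucc) (fun k _ => ?_)
            rw [hSp k]
            have h1 : t none k.castSucc = univ \ {z} := by simp [ht, hcsl k]
            rw [h1]
            exact hperase
        _ = ε ^ j := by rw [Finset.prod_const, Finset.card_univ, Fintype.card_fin]
        _ ≤ ε ^ (j - 1) := pow_le_pow_of_le_one hε0.le hε1 (by omega)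
  calc ∑ v ∈ univ.filter (fun v : Fin (j+1) → Fin b => Function.Injective v), g v
      ≤ ∑ v ∈ (univ : Finset (Option (Fin j))).biUnion (fun c => Fintype.piFinset (t c)), g v :=
        Finset.sum_le_sum_of_subset_of_nonneg hsub (fun v _ _ => hgnn v)
    _ ≤ ∑ c : Option (Fin j), ∑ v ∈ Fintype.piFinset (t c), g v :=
        sum_biUnion_le' _ _ _ hgnn
    _ ≤ ∑ _c : Option (Fin j), ε ^ (j - 1) := Finset.sum_le_sum fun c _ => hclass c
    _ = (j + 1) * ε ^ (j - 1) := by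
        rw [Finset.sum_const, Finset.card_univ, Fintype.card_option, Fintype.card_fin,
          nsmul_eq_mul]
        push_cast
        ring

theorem psi_concentrated_le (b j : ℕ) (hj : 2 ≤ j) (h : j + 1 ≤ b)
    (ε : ℝ) (hε0 : 0 < ε) (hε1 : ε ≤ 1)
    (p q : Fin b → ℝ) (hp : ∀ a, 0 ≤ p a) (hq : ∀ a, 0 ≤ q a)
    (hps : ∑ a, p a = 1) (hqs : ∑ a, q a = 1)
    (hp1 : 1 - ε ≤ p ⟨0, by omega⟩) (hq1 : 1 - ε ≤ q ⟨0, by omega⟩) :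
    psiPerm b j h p q ≤ 2 * (j + 1) * ε ^ (j - 1) := by
  classical
  have hfac : (0 : ℝ) < (Nat.factorial (b - j - 1) : ℝ) := by
    exact_mod_cast Nat.factorial_pos _
  have hεj : 0 ≤ ε ^ (j - 1) := le_of_lt (pow_pos hε0 _)
  set gp : (Fin (j+1) → Fin b) → ℝ := fun v =>
    (∏ k : Fin j, p (v k.castSucc)) * q (v (Fin.last j)) with hgp
  set gq : (Fin (j+1) → Fin b) → ℝ := fun v =>
    (∏ k : Fin j, q (v k.castSucc)) * p (v (Fin.last j)) with hgq
  have hgpnn : ∀ v, 0 ≤ gp v := fun v =>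
    mul_nonneg (Finset.prod_nonneg fun k _ => hp _) (hq _)
  have hgqnn : ∀ v, 0 ≤ gq v := fun v =>
    mul_nonneg (Finset.prod_nonneg fun k _ => hq _) (hp _)
  have hbm : b - (j + 1) = b - j - 1 := by omega
  have hA : ∑ σ : Equiv.Perm (Fin b), gp (fun i => σ (Fin.castLE h i)) ≤
      (Nat.factorial (b - j - 1) : ℝ) * ((j + 1) * ε ^ (j - 1)) := by
    calc ∑ σ : Equiv.Perm (Fin b), gp (fun i => σ (Fin.castLE h i))
        ≤ (Nat.factorial (b - (j+1)) : ℝ) *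
            ∑ v ∈ univ.filter (fun v : Fin (j+1) → Fin b => Function.Injective v), gp v :=
          sum_perm_le b (j+1) h gp hgpnn
      _ ≤ (Nat.factorial (b - j - 1) : ℝ) * ((j + 1) * ε ^ (j - 1)) := by
          rw [hbm]
          exact mul_le_mul_of_nonneg_left
            (tuple_sum_le b j hj h ε hε0 hε1 p q hp hq hps hqs hp1) hfac.le
  have hB : ∑ σ : Equiv.Perm (Fin b), gq (fun i => σ (Fin.castLE h i)) ≤
      (Nat.factorial (b - j - 1) : ℝ) * ((j + 1) * ε ^ (j - 1)) := by
    calc ∑ σ : Equiv.Perm (Fin b), gq (fun i => σ (Fin.castLE h i))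
        ≤ (Nat.factorial (b - (j+1)) : ℝ) *
            ∑ v ∈ univ.filter (fun v : Fin (j+1) → Fin b => Function.Injective v), gq v :=
          sum_perm_le b (j+1) h gq hgqnn
      _ ≤ (Nat.factorial (b - j - 1) : ℝ) * ((j + 1) * ε ^ (j - 1)) := by
          rw [hbm]
          exact mul_le_mul_of_nonneg_left
            (tuple_sum_le b j hj h ε hε0 hε1 q p hq hp hqs hps hq1) hfac.le
  have hsum : (∑ σ : Equiv.Perm (Fin b),
      ((∏ t : Fin j, p (σ (Fin.castLE (by omega : j ≤ b) t))) * q (σ (⟨j, by omega⟩ : Fin b))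
        + (∏ t : Fin j, q (σ (Fin.castLE (by omega : j ≤ b) t))) * p (σ (⟨j, by omega⟩ : Fin b))))
      = ∑ σ : Equiv.Perm (Fin b), gp (fun i => σ (Fin.castLE h i))
        + ∑ σ : Equiv.Perm (Fin b), gq (fun i => σ (Fin.castLE h i)) := by
    rw [← Finset.sum_add_distrib]
    exact Finset.sum_congr rfl fun σ _ => rfl
  rw [psiPerm, hsum]
  calc (1 / (Nat.factorial (b - j - 1) : ℝ)) *
        (∑ σ : Equiv.Perm (Fin b), gp (fun i => σ (Fin.castLE h i))
          + ∑ σ : Equiv.Perm (Fin b), gq (fun i => σ (Fin.castLE h i)))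
      ≤ (1 / (Nat.factorial (b - j - 1) : ℝ)) *
          ((Nat.factorial (b - j - 1) : ℝ) * ((j + 1) * ε ^ (j - 1))
            + (Nat.factorial (b - j - 1) : ℝ) * ((j + 1) * ε ^ (j - 1))) := by
        apply mul_le_mul_of_nonneg_left (by linarith) (by positivity)
    _ = 2 * (j + 1) * ε ^ (j - 1) := by
        field_simp
        ring
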